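/- For every M > 0 and integers m, n ≥ 0 there exists a constant C, depending only on m, n, M, such that |∂ₓⁿ ∂ₖᵐ u^{BS}(σ;τ,x,k)| ≤ C·eˣ·(σ√τ)^{min(1−m−n, 0)} for all x, k ∈ ℝ and all σ, τ > 0 with σ√τ ≤ M. -/

import Mathlib

noncomputable def Gauss (t x : ℝ) : ℝ :=
  (Real.sqrt (2 * Real.pi * t))⁻¹ * Real.exp (-x ^ 2 / (2 * t))

/-- Standard normal cumulative distribution function. -/
noncomputable def normalCDF (x : ℝ) : ℝ :=
  (Real.sqrt (2 * Real.pi))⁻¹ * ∫ s in Set.Iic x, Real.exp (-s ^ 2 / 2)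

/-- Black–Scholes call price `u^{BS}(σ; τ, x, k)` in log variables. -/
noncomputable def uBS (σ τ x k : ℝ) : ℝ :=
  Real.exp x * normalCDF ((x - k + σ ^ 2 * τ / 2) / (σ * Real.sqrt τ)) -
    Real.exp k * normalCDF ((x - k - σ ^ 2 * τ / 2) / (σ * Real.sqrt τ))

open Real MeasureTheory

namespace BS

noncomputable def gφ (y : ℝ) : ℝ := (Real.sqrt (2 * Real.pi))⁻¹ * Real.exp (-y ^ 2 / 2)

lemma g_eq : (fun s : ℝ => Real.exp (-s ^ 2 / 2)) = fun s => Real.exp (-(1/2 : ℝ) * s ^ 2) := by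
  funext s; congr 1; ring

lemma integrable_g : Integrable (fun s : ℝ => Real.exp (-s ^ 2 / 2)) := by
  rw [g_eq]; exact integrable_exp_neg_mul_sq (by norm_num)

lemma continuous_g : Continuous (fun s : ℝ => Real.exp (-s ^ 2 / 2)) := by
  continuity

lemma integral_g : (∫ s : ℝ, Real.exp (-s ^ 2 / 2)) = Real.sqrt (2 * Real.pi) := by
  rw [g_eq, integral_gaussian, show Real.pi / (1/2) = 2 * Real.pi by ring]

lemma hasDerivAt_normalCDF (y : ℝ) : HasDerivAt normalCDF (gφ y) y := by
  have h1 : ∀ x : ℝ, normalCDF x =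
      (Real.sqrt (2 * Real.pi))⁻¹ *
        ((∫ s in Set.Iic (0:ℝ), Real.exp (-s ^ 2 / 2)) + ∫ s in (0:ℝ)..x, Real.exp (-s ^ 2 / 2)) := by
    intro x
    rw [normalCDF, ← intervalIntegral.integral_Iic_sub_Iic integrable_g.integrableOn
      integrable_g.integrableOn]
    ring
  have h2 : HasDerivAt (fun x => ∫ s in (0:ℝ)..x, Real.exp (-s ^ 2 / 2))
      (Real.exp (-y ^ 2 / 2)) y :=
    intervalIntegral.integral_hasDerivAt_right integrable_g.intervalIntegrable
      continuous_g.aestronglyMeasurable.stronglyMeasurableAtFilter continuous_g.continuousAt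
  have h3 := ((h2.const_add (∫ s in Set.Iic (0:ℝ), Real.exp (-s ^ 2 / 2))).const_mul
    ((Real.sqrt (2 * Real.pi))⁻¹))
  simp only [← h1] at h3
  exact h3

lemma normalCDF_nonneg (x : ℝ) : 0 ≤ normalCDF x := by
  apply mul_nonneg (inv_nonneg.2 (Real.sqrt_nonneg _))
  exact integral_nonneg fun s => (Real.exp_pos _).le

lemma sqrt_two_pi_pos : 0 < Real.sqrt (2 * Real.pi) :=
  Real.sqrt_pos.2 (by positivity)

lemma integral_Iic_g_le (y : ℝ) :
    (∫ s in Set.Iic y, Real.exp (-s ^ 2 / 2)) ≤ Real.sqrt (2 * Real.pi) := by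
  rw [← integral_g]
  exact setIntegral_le_integral integrable_g
    (Filter.Eventually.of_forall fun s => (Real.exp_pos _).le)

lemma normalCDF_le_one (x : ℝ) : normalCDF x ≤ 1 := by
  rw [normalCDF]
  rw [inv_mul_le_iff₀ sqrt_two_pi_pos, mul_one]
  exact integral_Iic_g_le x

/-- Chernoff: for `y ≤ 0`, `N(y) ≤ exp (-y^2/2)`. -/
lemma normalCDF_le_exp (y : ℝ) (hy : y ≤ 0) : normalCDF y ≤ Real.exp (-y ^ 2 / 2) := by
  have hint : Integrable (fun s : ℝ => Real.exp (-y ^ 2 / 2) * Real.exp (-(s - y) ^ 2 / 2)) := by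
    apply Integrable.const_mul
    simpa using (integrable_g.comp_sub_right y)
  have key : (∫ s in Set.Iic y, Real.exp (-s ^ 2 / 2))
      ≤ Real.sqrt (2 * Real.pi) * Real.exp (-y ^ 2 / 2) := by
    have hb : ∀ s ∈ Set.Iic y, Real.exp (-s ^ 2 / 2)
        ≤ Real.exp (-y ^ 2 / 2) * Real.exp (-(s - y) ^ 2 / 2) := by
      intro s hs
      rw [← Real.exp_add]
      apply Real.exp_le_exp.2
      simp only [Set.mem_Iic] at hs
      nlinarith [mul_nonneg (neg_nonneg.2 hy) (sub_nonneg.2 hs)]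
    calc (∫ s in Set.Iic y, Real.exp (-s ^ 2 / 2))
        ≤ ∫ s in Set.Iic y, Real.exp (-y ^ 2 / 2) * Real.exp (-(s - y) ^ 2 / 2) :=
          setIntegral_mono_on integrable_g.integrableOn hint.integrableOn
            measurableSet_Iic hb
      _ ≤ ∫ s : ℝ, Real.exp (-y ^ 2 / 2) * Real.exp (-(s - y) ^ 2 / 2) :=
          setIntegral_le_integral hint (Filter.Eventually.of_forall fun s => by positivity)
      _ = Real.exp (-y ^ 2 / 2) * ∫ s : ℝ, Real.exp (-(s - y) ^ 2 / 2) := by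
          rw [integral_const_mul]
      _ = Real.sqrt (2 * Real.pi) * Real.exp (-y ^ 2 / 2) := by
          rw [show (fun s : ℝ => Real.exp (-(s - y) ^ 2 / 2))
              = fun s : ℝ => (fun u : ℝ => Real.exp (-u ^ 2 / 2)) (s - y) from rfl,
            integral_sub_right_eq_self (fun u : ℝ => Real.exp (-u ^ 2 / 2)) y, integral_g]
          ring
  rw [normalCDF, inv_mul_le_iff₀ sqrt_two_pi_pos]
  calc (∫ s in Set.Iic y, Real.exp (-s ^ 2 / 2))
      ≤ Real.sqrt (2 * Real.pi) * Real.exp (-y ^ 2 / 2) := key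
    _ = Real.sqrt (2 * Real.pi) * Real.exp (-y ^ 2 / 2) := rfl


noncomputable def dp (s x k : ℝ) : ℝ := (x - k) / s + s / 2

lemma exp_mul_gφ (s x k : ℝ) (hs : s ≠ 0) :
    Real.exp (k - x) * gφ (dp s x k - s) = gφ (dp s x k) := by
  unfold gφ dp
  rw [mul_comm (Real.exp _), mul_assoc, ← Real.exp_add]
  congr 2
  field_simp
  ring

lemma hasDerivAt_gφ (y : ℝ) : HasDerivAt gφ (-y * gφ y) y := by
  have h : HasDerivAt (fun y : ℝ => -y ^ 2 / 2) (-y) y := by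
    have := ((hasDerivAt_pow 2 y).neg).div_const 2
    refine this.congr_deriv ?_
    simp; ring
  have h2 := (h.exp).const_mul ((Real.sqrt (2 * Real.pi))⁻¹)
  refine h2.congr_deriv ?_
  unfold gφ; ring

lemma hasDerivAt_dp_x (s : ℝ) (hs : s ≠ 0) (k x : ℝ) :
    HasDerivAt (fun x' => dp s x' k) s⁻¹ x := by
  have := (((hasDerivAt_id x).sub_const k).div_const s).add_const (s / 2)
  simpa [dp, one_div] using this

inductive Ex where
  | np : Ex
  | nm : Ex
  | phi : ℕ → ℕ → Ex
  | smul : ℝ → Ex → Ex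
  | add : Ex → Ex → Ex

noncomputable def ev (s x k : ℝ) : Ex → ℝ
  | .np => normalCDF (dp s x k)
  | .nm => Real.exp (k - x) * normalCDF (dp s x k - s)
  | .phi i j => dp s x k ^ i * s⁻¹ ^ j * gφ (dp s x k)
  | .smul c e => c * ev s x k e
  | .add a b => ev s x k a + ev s x k b

def dex : Ex → Ex
  | .np => .phi 0 1
  | .nm => .add (.smul (-1) .nm) (.phi 0 1)
  | .phi i j => .add (.smul i (.phi (i - 1) (j + 1))) (.smul (-1) (.phi (i + 1) (j + 1)))
  | .smul c e => .smul c (dex e)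
  | .add a b => .add (dex a) (dex b)

lemma ev_hasDerivAt_x (s : ℝ) (hs : 0 < s) (k : ℝ) (e : Ex) (x : ℝ) :
    HasDerivAt (fun x' => ev s x' k e) (ev s x k (dex e)) x := by
  induction e with
  | np =>
    have h := (hasDerivAt_normalCDF (dp s x k)).comp x (hasDerivAt_dp_x s hs.ne' k x)
    simp only [ev, dex]
    refine h.congr_deriv ?_
    simp [ev]
    ring
  | nm =>
    have h1 : HasDerivAt (fun x' => Real.exp (k - x')) (-Real.exp (k - x)) x := by
      have := (((hasDerivAt_id x).neg.const_add k)).exp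
      simpa [sub_eq_add_neg] using this
    have h2 : HasDerivAt (fun x' => normalCDF (dp s x' k - s)) (gφ (dp s x k - s) * s⁻¹) x :=
      (hasDerivAt_normalCDF _).comp x ((hasDerivAt_dp_x s hs.ne' k x).sub_const s)
    have h := h1.mul h2
    simp only [ev, dex]
    refine h.congr_deriv ?_
    rw [← exp_mul_gφ s x k hs.ne']
    simp [ev]
    ring
  | phi i j =>
    have h1 : HasDerivAt (fun x' => dp s x' k ^ i) ((i : ℝ) * dp s x k ^ (i - 1) * s⁻¹) x :=
      (hasDerivAt_pow i (dp s x k)).comp x (hasDerivAt_dp_x s hs.ne' k x)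
    have h2 : HasDerivAt (fun x' => gφ (dp s x' k)) (-dp s x k * gφ (dp s x k) * s⁻¹) x := by
      have := (hasDerivAt_gφ (dp s x k)).comp x (hasDerivAt_dp_x s hs.ne' k x)
      exact this
      try ring
    have h := (h1.mul_const (s⁻¹ ^ j)).mul h2
    simp only [ev, dex]
    refine h.congr_deriv ?_
    simp [ev]
    try ring
  | smul c e ih =>
    simp only [ev, dex]
    exact ih.const_mul c
  | add a b iha ihb =>
    simp only [ev, dex]
    exact iha.add ihb

lemma dp_shift (s x k c : ℝ) : dp s (x - c) (k - c) = dp s x k := by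
  unfold dp; ring_nf

lemma ev_shift (s x k c : ℝ) (e : Ex) : ev s (x - c) (k - c) e = ev s x k e := by
  induction e with
  | np => simp [ev, dp_shift]
  | nm => simp [ev, dp_shift, show k - c - (x - c) = k - x by ring]
  | phi i j => simp [ev, dp_shift]
  | smul c' e ih => simp [ev, ih]
  | add a b iha ihb => simp [ev, iha, ihb]

lemma ev_hasDerivAt_k (s : ℝ) (hs : 0 < s) (x : ℝ) (e : Ex) (k : ℝ) :
    HasDerivAt (fun k' => ev s x k' e) (-ev s x k (dex e)) k := by
  have heq : (fun k' => ev s x k' e) = fun k' => ev s (x - k') 0 e := by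
    funext k'
    have := ev_shift s x k' k' e
    simpa using this.symm
  have hinner : HasDerivAt (fun k' : ℝ => x - k') (-1 : ℝ) k := by
    simpa using (hasDerivAt_id k).const_sub x
  have h := (ev_hasDerivAt_x s hs 0 e (x - k)).comp k hinner
  rw [heq]
  refine h.congr_deriv ?_
  have := ev_shift s x k k (dex e)
  simp at this
  rw [← this]
  ring

def Dk (e : Ex) : Ex := .smul (-1) (dex e)
def Dxx (e : Ex) : Ex := .add e (dex e)
def E0 : Ex := .add .np (.smul (-1) .nm)
def E1k : Ex := .smul (-1) .nm

lemma iter_k (s : ℝ) (hs : 0 < s) (x : ℝ) :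
    ∀ (p : ℕ) (e : Ex) (k : ℝ),
      iteratedDeriv p (fun k' => Real.exp x * ev s x k' e) k
        = Real.exp x * ev s x k (Dk^[p] e) := by
  intro p
  induction p with
  | zero => intro e k; simp
  | succ p ih =>
    intro e k
    rw [iteratedDeriv_succ']
    have hder : (deriv fun k' => Real.exp x * ev s x k' e)
        = fun k' => Real.exp x * ev s x k' (Dk e) := by
      funext k'
      rw [((ev_hasDerivAt_k s hs x e k').const_mul (Real.exp x)).deriv]
      simp [Dk, ev]
    rw [hder, ih (Dk e) k, ← Function.iterate_succ_apply]

lemma iter_x (s : ℝ) (hs : 0 < s) (k : ℝ) :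
    ∀ (p : ℕ) (e : Ex) (x : ℝ),
      iteratedDeriv p (fun x' => Real.exp x' * ev s x' k e) x
        = Real.exp x * ev s x k (Dxx^[p] e) := by
  intro p
  induction p with
  | zero => intro e x; simp
  | succ p ih =>
    intro e x
    rw [iteratedDeriv_succ']
    have hder : (deriv fun x' => Real.exp x' * ev s x' k e)
        = fun x' => Real.exp x' * ev s x' k (Dxx e) := by
      funext x'
      rw [HasDerivAt.deriv (f := fun x' => Real.exp x' * ev s x' k e) ((Real.hasDerivAt_exp x').mul (ev_hasDerivAt_x s hs k e x'))]
      simp [Dxx, ev]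
      ring
    rw [hder, ih (Dxx e) x, ← Function.iterate_succ_apply]

lemma ev_congr_dex (s : ℝ) (hs : 0 < s) {e₁ e₂ : Ex}
    (h : ∀ x k, ev s x k e₁ = ev s x k e₂) (x k : ℝ) :
    ev s x k (dex e₁) = ev s x k (dex e₂) := by
  have h1 := ev_hasDerivAt_x s hs k e₁ x
  have h2 := ev_hasDerivAt_x s hs k e₂ x
  have heq : (fun x' => ev s x' k e₁) = fun x' => ev s x' k e₂ := funext fun x' => h x' k
  rw [heq] at h1
  exact h1.unique h2

lemma ev_congr_iter_Dk (s : ℝ) (hs : 0 < s) :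
    ∀ (p : ℕ) {e₁ e₂ : Ex}, (∀ x k, ev s x k e₁ = ev s x k e₂) →
      ∀ x k, ev s x k (Dk^[p] e₁) = ev s x k (Dk^[p] e₂) := by
  intro p
  induction p with
  | zero => intro e₁ e₂ h x k; simpa using h x k
  | succ p ih =>
    intro e₁ e₂ h x k
    rw [Function.iterate_succ_apply', Function.iterate_succ_apply']
    simp only [Dk, ev]
    rw [ev_congr_dex s hs (ih h) x k]

lemma ev_congr_iter_Dxx (s : ℝ) (hs : 0 < s) :
    ∀ (p : ℕ) {e₁ e₂ : Ex}, (∀ x k, ev s x k e₁ = ev s x k e₂) →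
      ∀ x k, ev s x k (Dxx^[p] e₁) = ev s x k (Dxx^[p] e₂) := by
  intro p
  induction p with
  | zero => intro e₁ e₂ h x k; simpa using h x k
  | succ p ih =>
    intro e₁ e₂ h x k
    rw [Function.iterate_succ_apply', Function.iterate_succ_apply']
    simp only [Dxx, ev]
    rw [ev_congr_dex s hs (ih h) x k, ih h x k]

def mj : Ex → ℕ
  | .np => 0
  | .nm => 0
  | .phi _ j => j
  | .smul _ e => mj e
  | .add a b => max (mj a) (mj b)

lemma mj_dex (e : Ex) : mj (dex e) ≤ mj e + 1 := by
  induction e with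
  | np => simp [dex, mj]
  | nm => simp [dex, mj]
  | phi i j => simp [dex, mj]
  | smul c e ih => simpa [dex, mj] using ih
  | add a b iha ihb => simp [dex, mj]; omega

lemma mj_Dk (e : Ex) : mj (Dk e) ≤ mj e + 1 := mj_dex e

lemma mj_Dxx (e : Ex) : mj (Dxx e) ≤ mj e + 1 := by
  have := mj_dex e
  simp [Dxx, mj]
  omega

lemma mj_iter_Dk (p : ℕ) (e : Ex) : mj (Dk^[p] e) ≤ mj e + p := by
  induction p with
  | zero => simp
  | succ p ih =>
    rw [Function.iterate_succ_apply']
    have := mj_Dk (Dk^[p] e)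
    omega

lemma mj_iter_Dxx (p : ℕ) (e : Ex) : mj (Dxx^[p] e) ≤ mj e + p := by
  induction p with
  | zero => simp
  | succ p ih =>
    rw [Function.iterate_succ_apply']
    have := mj_Dxx (Dxx^[p] e)
    omega

lemma nm_le_one (s x k : ℝ) (hs : 0 < s) :
    Real.exp (k - x) * normalCDF (dp s x k - s) ≤ 1 := by
  rcases le_or_gt (dp s x k - s) 0 with hy | hy
  · calc Real.exp (k - x) * normalCDF (dp s x k - s)
        ≤ Real.exp (k - x) * Real.exp (-(dp s x k - s) ^ 2 / 2) :=
          mul_le_mul_of_nonneg_left (normalCDF_le_exp _ hy) (Real.exp_pos _).le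
      _ = Real.exp ((k - x) + -(dp s x k - s) ^ 2 / 2) := (Real.exp_add _ _).symm
      _ = Real.exp (-(dp s x k) ^ 2 / 2) := by
          congr 1
          unfold dp
          field_simp
          ring
      _ ≤ 1 := Real.exp_le_one_iff.2 (by nlinarith [sq_nonneg (dp s x k)])
  · have h2 : 0 < (dp s x k - s) * s := mul_pos hy hs
    have h3 : (dp s x k - s) * s = (x - k) - s ^ 2 / 2 := by
      unfold dp; field_simp; ring
    have hkx : k - x ≤ 0 := by nlinarith [sq_nonneg s]
    calc Real.exp (k - x) * normalCDF (dp s x k - s)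
        ≤ 1 * 1 := by
          apply mul_le_mul (Real.exp_le_one_iff.2 hkx) (normalCDF_le_one _)
            (normalCDF_nonneg _) zero_le_one
      _ = 1 := mul_one 1

lemma pow_inv_le {M s : ℝ} (hs : 0 < s) (hsM : s ≤ M) {j J : ℕ} (hj : j ≤ J) :
    s⁻¹ ^ j ≤ (max 1 M) ^ J * s⁻¹ ^ J := by
  have hM1 : (1 : ℝ) ≤ max 1 M := le_max_left 1 M
  calc s⁻¹ ^ j = s⁻¹ ^ j * (s⁻¹ * s) ^ (J - j) := by
        rw [inv_mul_cancel₀ hs.ne', one_pow, mul_one]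
    _ = s⁻¹ ^ j * s⁻¹ ^ (J - j) * s ^ (J - j) := by rw [mul_pow]; ring
    _ = s⁻¹ ^ J * s ^ (J - j) := by rw [← pow_add, Nat.add_sub_cancel' hj]
    _ = s ^ (J - j) * s⁻¹ ^ J := mul_comm _ _
    _ ≤ (max 1 M) ^ (J - j) * s⁻¹ ^ J :=
        mul_le_mul_of_nonneg_right
          (pow_le_pow_left₀ hs.le (hsM.trans (le_max_right 1 M)) _) (by positivity)
    _ ≤ (max 1 M) ^ J * s⁻¹ ^ J :=
        mul_le_mul_of_nonneg_right
          (pow_le_pow_right₀ hM1 (Nat.sub_le J j)) (by positivity)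

lemma abs_pow_mul_exp_le (i : ℕ) (y : ℝ) :
    |y| ^ i * Real.exp (-y ^ 2 / 2) ≤ (i.factorial : ℝ) * Real.exp 2⁻¹ := by
  have h1 : |y| ^ i ≤ (i.factorial : ℝ) * Real.exp |y| := by
    have h := Real.pow_div_factorial_le_exp (x := |y|) (abs_nonneg y) i
    rw [div_le_iff₀ (by positivity : (0:ℝ) < (i.factorial : ℝ))] at h
    linarith [h]
  calc |y| ^ i * Real.exp (-y ^ 2 / 2)
      ≤ ((i.factorial : ℝ) * Real.exp |y|) * Real.exp (-y ^ 2 / 2) :=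
        mul_le_mul_of_nonneg_right h1 (Real.exp_pos _).le
    _ = (i.factorial : ℝ) * Real.exp (|y| + -y ^ 2 / 2) := by
        rw [mul_assoc, ← Real.exp_add]
    _ ≤ (i.factorial : ℝ) * Real.exp 2⁻¹ := by
        apply mul_le_mul_of_nonneg_left _ (by positivity)
        apply Real.exp_le_exp.2
        nlinarith [sq_nonneg (|y| - 1), sq_abs y]

lemma gφ_le (y : ℝ) : gφ y ≤ Real.exp (-y ^ 2 / 2) := by
  unfold gφ
  have h1 : (Real.sqrt (2 * Real.pi))⁻¹ ≤ 1 := by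
    rw [inv_le_one_iff₀]
    right
    rw [show (1:ℝ) = Real.sqrt 1 from (Real.sqrt_one).symm]
    exact Real.sqrt_le_sqrt (by nlinarith [Real.pi_gt_three])
  calc (Real.sqrt (2 * Real.pi))⁻¹ * Real.exp (-y ^ 2 / 2)
      ≤ 1 * Real.exp (-y ^ 2 / 2) := by gcongr
    _ = Real.exp (-y ^ 2 / 2) := one_mul _

lemma gφ_nonneg (y : ℝ) : 0 ≤ gφ y := by
  unfold gφ; positivity

lemma ev_bound (M : ℝ) (hM : 0 < M) (e : Ex) :
    ∀ J : ℕ, mj e ≤ J → ∃ C : ℝ, 0 < C ∧ ∀ s x k : ℝ, 0 < s → s ≤ M →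
      |ev s x k e| ≤ C * s⁻¹ ^ J := by
  induction e with
  | np =>
    intro J _
    refine ⟨(max 1 M) ^ J, by positivity, fun s x k hs hsM => ?_⟩
    have h1 : |ev s x k Ex.np| ≤ 1 := by
      simp only [ev]
      rw [abs_of_nonneg (normalCDF_nonneg _)]
      exact normalCDF_le_one _
    calc |ev s x k Ex.np| ≤ 1 := h1
      _ = s⁻¹ ^ 0 := by simp
      _ ≤ (max 1 M) ^ J * s⁻¹ ^ J := pow_inv_le hs hsM (Nat.zero_le J)
  | nm =>
    intro J _
    refine ⟨(max 1 M) ^ J, by positivity, fun s x k hs hsM => ?_⟩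
    have h0 : (0:ℝ) ≤ ev s x k Ex.nm := by
      simp only [ev]
      exact mul_nonneg (Real.exp_pos _).le (normalCDF_nonneg _)
    have h1 : |ev s x k Ex.nm| ≤ 1 := by
      rw [abs_of_nonneg h0]
      exact nm_le_one s x k hs
    calc |ev s x k Ex.nm| ≤ 1 := h1
      _ = s⁻¹ ^ 0 := by simp
      _ ≤ (max 1 M) ^ J * s⁻¹ ^ J := pow_inv_le hs hsM (Nat.zero_le J)
  | phi i j =>
    intro J hJ
    simp only [mj] at hJ
    refine ⟨((i.factorial : ℝ) * Real.exp 2⁻¹) * (max 1 M) ^ J, by positivity,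
      fun s x k hs hsM => ?_⟩
    have hsi : (0:ℝ) ≤ s⁻¹ ^ j := by positivity
    have h1 : |ev s x k (Ex.phi i j)| ≤ ((i.factorial : ℝ) * Real.exp 2⁻¹) * s⁻¹ ^ j := by
      simp only [ev, abs_mul, abs_pow]
      rw [abs_of_nonneg (gφ_nonneg _), abs_of_nonneg (inv_nonneg.2 hs.le)]
      calc |dp s x k| ^ i * s⁻¹ ^ j * gφ (dp s x k)
          ≤ |dp s x k| ^ i * s⁻¹ ^ j * Real.exp (-(dp s x k) ^ 2 / 2) :=
            mul_le_mul_of_nonneg_left (gφ_le _) (by positivity)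
        _ = (|dp s x k| ^ i * Real.exp (-(dp s x k) ^ 2 / 2)) * s⁻¹ ^ j := by ring
        _ ≤ ((i.factorial : ℝ) * Real.exp 2⁻¹) * s⁻¹ ^ j :=
            mul_le_mul_of_nonneg_right (abs_pow_mul_exp_le i (dp s x k)) (by positivity)
    calc |ev s x k (Ex.phi i j)| ≤ ((i.factorial : ℝ) * Real.exp 2⁻¹) * s⁻¹ ^ j := h1
      _ ≤ ((i.factorial : ℝ) * Real.exp 2⁻¹) * ((max 1 M) ^ J * s⁻¹ ^ J) :=
          mul_le_mul_of_nonneg_left (pow_inv_le hs hsM hJ) (by positivity)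
      _ = ((i.factorial : ℝ) * Real.exp 2⁻¹) * (max 1 M) ^ J * s⁻¹ ^ J := by ring
  | smul c e ih =>
    intro J hJ
    simp only [mj] at hJ
    obtain ⟨C, hC, hb⟩ := ih J hJ
    refine ⟨(|c| + 1) * C, by positivity, fun s x k hs hsM => ?_⟩
    simp only [ev, abs_mul]
    calc |c| * |ev s x k e| ≤ |c| * (C * s⁻¹ ^ J) :=
          mul_le_mul_of_nonneg_left (hb s x k hs hsM) (abs_nonneg c)
      _ ≤ (|c| + 1) * C * s⁻¹ ^ J := by
          have : (0:ℝ) ≤ s⁻¹ ^ J := by positivity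
          nlinarith [abs_nonneg c]
  | add a b iha ihb =>
    intro J hJ
    simp only [mj, max_le_iff] at hJ
    obtain ⟨Ca, hCa, hba⟩ := iha J hJ.1
    obtain ⟨Cb, hCb, hbb⟩ := ihb J hJ.2
    refine ⟨Ca + Cb, by positivity, fun s x k hs hsM => ?_⟩
    simp only [ev]
    calc |ev s x k a + ev s x k b| ≤ |ev s x k a| + |ev s x k b| := abs_add_le _ _
      _ ≤ Ca * s⁻¹ ^ J + Cb * s⁻¹ ^ J := add_le_add (hba s x k hs hsM) (hbb s x k hs hsM)
      _ = (Ca + Cb) * s⁻¹ ^ J := by ring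

lemma uBS_eq (σ τ x k : ℝ) (hσ : 0 < σ) (hτ : 0 < τ) :
    uBS σ τ x k = Real.exp x * ev (σ * Real.sqrt τ) x k E0 := by
  have hs : 0 < σ * Real.sqrt τ := mul_pos hσ (Real.sqrt_pos.2 hτ)
  have hs2 : (σ * Real.sqrt τ) ^ 2 = σ ^ 2 * τ := by
    rw [mul_pow, Real.sq_sqrt hτ.le]
  have h1 : (x - k + σ ^ 2 * τ / 2) / (σ * Real.sqrt τ) = dp (σ * Real.sqrt τ) x k := by
    rw [dp, ← hs2]
    field_simp
  have h2 : (x - k - σ ^ 2 * τ / 2) / (σ * Real.sqrt τ)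
      = dp (σ * Real.sqrt τ) x k - σ * Real.sqrt τ := by
    rw [dp, ← hs2]
    field_simp
    ring
  have h3 : Real.exp x * Real.exp (k - x) = Real.exp k := by
    rw [← Real.exp_add]; congr 1; ring
  rw [uBS, h1, h2]
  simp only [E0, ev]
  linear_combination normalCDF (dp (σ * Real.sqrt τ) x k - σ * Real.sqrt τ) * h3

lemma rpow_min_eq (s : ℝ) (hs : 0 < s) (m n : ℕ) :
    s ^ (min (1 - (m : ℝ) - n) 0) = s⁻¹ ^ (m + n - 1) := by
  rcases Nat.eq_zero_or_pos (m + n) with h | h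
  · obtain ⟨hm, hn⟩ := Nat.add_eq_zero.mp h
    subst hm; subst hn
    norm_num
  · have hle : (1 : ℝ) ≤ (m : ℝ) + n := by exact_mod_cast h
    have h1 : min (1 - (m : ℝ) - n) 0 = -(((m + n - 1 : ℕ) : ℝ)) := by
      rw [min_eq_left (by linarith)]
      have hcast : ((m + n - 1 : ℕ) : ℝ) = (m : ℝ) + n - 1 := by
        rw [Nat.cast_sub h]
        push_cast
        ring
      rw [hcast]; ring
    rw [h1, Real.rpow_neg hs.le, Real.rpow_natCast, inv_pow]

theorem main (M : ℝ) (hM : 0 < M) (m n : ℕ) :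
    ∃ C > 0, ∀ x k σ τ : ℝ, 0 < σ → 0 < τ → σ * Real.sqrt τ ≤ M →
      |iteratedDeriv n (fun x' => iteratedDeriv m (fun k' => uBS σ τ x' k') k) x| ≤
        C * Real.exp x * (σ * Real.sqrt τ) ^ (min (1 - (m : ℝ) - n) 0) := by
  obtain ⟨ered, hmj, hval⟩ : ∃ e : Ex, mj e ≤ m + n - 1 ∧
      ∀ s : ℝ, 0 < s → ∀ x k : ℝ, ev s x k (Dxx^[n] (Dk^[m] E0)) = ev s x k e := by
    rcases m with _ | q
    · rcases n with _ | r
      · exact ⟨E0, by simp [E0, mj], fun s hs x k => by simp⟩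
      · refine ⟨Dxx^[r] Ex.np, ?_, fun s hs x k => ?_⟩
        · have := mj_iter_Dxx r Ex.np
          simp only [mj] at this ⊢
          omega
        · have hbase : ∀ x k : ℝ, ev s x k (Dxx E0) = ev s x k Ex.np := by
            intro x k
            simp [Dxx, dex, ev, E0]
            try ring
          have := ev_congr_iter_Dxx s hs r hbase x k
          rw [Function.iterate_succ_apply]
          simpa using this
    · refine ⟨Dxx^[n] (Dk^[q] E1k), ?_, fun s hs x k => ?_⟩
      · have h1 := mj_iter_Dk q E1k
        have h2 := mj_iter_Dxx n (Dk^[q] E1k)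
        have h0 : mj E1k = 0 := rfl
        omega
      · have hbase : ∀ x k : ℝ, ev s x k (Dk E0) = ev s x k E1k := by
          intro x k
          simp [Dk, dex, ev, E0, E1k]
          try ring
        have hstep := ev_congr_iter_Dk s hs q hbase
        have hstep2 : ∀ x k : ℝ, ev s x k (Dk^[q + 1] E0) = ev s x k (Dk^[q] E1k) := by
          intro x k
          rw [Function.iterate_succ_apply]
          exact hstep x k
        exact ev_congr_iter_Dxx s hs n hstep2 x k
  obtain ⟨C, hC, hbound⟩ := ev_bound M hM ered (m + n - 1) hmj
  refine ⟨C, hC, fun x k σ τ hσ hτ hsM => ?_⟩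
  have hs : 0 < σ * Real.sqrt τ := mul_pos hσ (Real.sqrt_pos.2 hτ)
  set s := σ * Real.sqrt τ with hsdef
  have hrepr : iteratedDeriv n (fun x' => iteratedDeriv m (fun k' => uBS σ τ x' k') k) x
      = Real.exp x * ev s x k (Dxx^[n] (Dk^[m] E0)) := by
    have hinner : (fun x' => iteratedDeriv m (fun k' => uBS σ τ x' k') k)
        = fun x' => Real.exp x' * ev s x' k (Dk^[m] E0) := by
      funext x'
      have heq : (fun k' => uBS σ τ x' k') = fun k' => Real.exp x' * ev s x' k' E0 :=
        funext fun k' => uBS_eq σ τ x' k' hσ hτ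
      rw [heq, iter_k s hs x' m E0 k]
    rw [hinner, iter_x s hs k n (Dk^[m] E0) x]
  rw [hrepr, hval s hs x k, rpow_min_eq s hs m n, abs_mul, Real.abs_exp]
  calc Real.exp x * |ev s x k ered|
      ≤ Real.exp x * (C * s⁻¹ ^ (m + n - 1)) :=
        mul_le_mul_of_nonneg_left (hbound s x k hs hsM) (Real.exp_pos x).le
    _ = C * Real.exp x * s⁻¹ ^ (m + n - 1) := by ring

end BS

theorem stmt_9 (M : ℝ) (hM : 0 < M) (m n : ℕ) :
    ∃ C > 0, ∀ x k σ τ : ℝ, 0 < σ → 0 < τ → σ * Real.sqrt τ ≤ M →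
      |iteratedDeriv n (fun x' => iteratedDeriv m (fun k' => uBS σ τ x' k') k) x| ≤
        C * Real.exp x * (σ * Real.sqrt τ) ^ (min (1 - (m : ℝ) - n) 0) := by
  exact BS.main M hM m n
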